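/- Let D₁₁, D₂₂ > 0 and let K̃ : ℝ³ → ℝ be twice continuously differentiable. Define K(x, y, θ) = K̃(x/√(2D₂₂), θ/√(2D₁₁), 2(y − xθ/2)/√(D₁₁D₂₂)). Then for all (x, y, θ) ∈ ℝ³: D₁₁ (∂_θ² K)(x, y, θ) + D₂₂ ((∂_x + θ∂_y)² K)(x, y, θ) = (1/2)[((∂₂ − 2u₁∂₃)² K̃) + ((∂₁ + 2u₂∂₃)² K̃)] evaluated at (u₁, u₂, u₃) = (x/√(2D₂₂), θ/√(2D₁₁), 2(y − xθ/2)/√(D₁₁D₂₂)), where ∂ᵢ denotes the partial derivative with respect to the i-th argument of K̃. Thus the coordinate transformation carries the Heisenberg approximation of the SE(2) diffusion generator to one half of the Kohn Laplacian on the Heisenberg group H₃. -/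

import Mathlib

/-!
STATEMENT 10: Under the coordinate transformation
u = (x/√(2D₂₂), θ/√(2D₁₁), 2(y − xθ/2)/√(D₁₁D₂₂)),
the Heisenberg approximation of the SE(2) diffusion generator satisfies
D₁₁ ∂_θ² K + D₂₂ (∂_x + θ∂_y)² K
  = ½ [ (∂₂ − 2u₁∂₃)² K̃ + (∂₁ + 2u₂∂₃)² K̃ ] ∘ u,
where K = K̃ ∘ u; i.e. it is carried to one half of the Kohn Laplacian on H₃.
Points of the (x,y,θ)-space and of the (u₁,u₂,u₃)-space are triples in ℝ × ℝ × ℝ.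
-/

/-- `∂_θ`, acting on functions of p = (x, y, θ). -/
noncomputable def Dtheta (f : ℝ × ℝ × ℝ → ℝ) (p : ℝ × ℝ × ℝ) : ℝ :=
  fderiv ℝ f p (0, 0, 1)

/-- The Heisenberg-approximation horizontal derivative `∂_x + θ ∂_y`,
acting on functions of p = (x, y, θ). -/
noncomputable def Dhor (f : ℝ × ℝ × ℝ → ℝ) (p : ℝ × ℝ × ℝ) : ℝ :=
  fderiv ℝ f p (1, p.2.2, 0)

/-- The Heisenberg vector field `∂₂ − 2u₁∂₃`, acting on functions of u = (u₁, u₂, u₃). -/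
noncomputable def X1 (f : ℝ × ℝ × ℝ → ℝ) (u : ℝ × ℝ × ℝ) : ℝ :=
  fderiv ℝ f u (0, 1, 0) - 2 * u.1 * fderiv ℝ f u (0, 0, 1)

/-- The Heisenberg vector field `∂₁ + 2u₂∂₃`, acting on functions of u = (u₁, u₂, u₃). -/
noncomputable def X2 (f : ℝ × ℝ × ℝ → ℝ) (u : ℝ × ℝ × ℝ) : ℝ :=
  fderiv ℝ f u (1, 0, 0) + 2 * u.2.1 * fderiv ℝ f u (0, 0, 1)

/-- The coordinate transformation
`(x, y, θ) ↦ (x/√(2D₂₂), θ/√(2D₁₁), 2(y − xθ/2)/√(D₁₁D₂₂))`. -/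
noncomputable def coordMap (D11 D22 : ℝ) (p : ℝ × ℝ × ℝ) : ℝ × ℝ × ℝ :=
  (p.1 / Real.sqrt (2 * D22), p.2.2 / Real.sqrt (2 * D11),
    2 * (p.2.1 - p.1 * p.2.2 / 2) / Real.sqrt (D11 * D22))

noncomputable def P1 : (ℝ × ℝ × ℝ) →L[ℝ] ℝ := ContinuousLinearMap.fst ℝ ℝ (ℝ × ℝ)
noncomputable def P2 : (ℝ × ℝ × ℝ) →L[ℝ] ℝ :=
  (ContinuousLinearMap.fst ℝ ℝ ℝ).comp (ContinuousLinearMap.snd ℝ ℝ (ℝ × ℝ))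
noncomputable def P3 : (ℝ × ℝ × ℝ) →L[ℝ] ℝ :=
  (ContinuousLinearMap.snd ℝ ℝ ℝ).comp (ContinuousLinearMap.snd ℝ ℝ (ℝ × ℝ))

@[simp] lemma P1_apply (v : ℝ × ℝ × ℝ) : P1 v = v.1 := rfl
@[simp] lemma P2_apply (v : ℝ × ℝ × ℝ) : P2 v = v.2.1 := rfl
@[simp] lemma P3_apply (v : ℝ × ℝ × ℝ) : P3 v = v.2.2 := rfl

noncomputable def Aq (D11 D22 : ℝ) (q : ℝ × ℝ × ℝ) : (ℝ × ℝ × ℝ) →L[ℝ] (ℝ × ℝ × ℝ) :=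
  ((Real.sqrt (2 * D22))⁻¹ • P1).prod (((Real.sqrt (2 * D11))⁻¹ • P3).prod
    ((Real.sqrt (D11 * D22))⁻¹ • (((2:ℝ) • P2) - (q.1 • P3) - (q.2.2 • P1))))

@[simp] lemma Aq_apply (D11 D22 : ℝ) (q v : ℝ × ℝ × ℝ) :
    Aq D11 D22 q v = ((Real.sqrt (2 * D22))⁻¹ * v.1, (Real.sqrt (2 * D11))⁻¹ * v.2.2,
      (Real.sqrt (D11 * D22))⁻¹ * (2 * v.2.1 - q.1 * v.2.2 - q.2.2 * v.1)) := by
  simp [Aq, ContinuousLinearMap.prod_apply, ContinuousLinearMap.smul_apply,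
    ContinuousLinearMap.sub_apply, smul_eq_mul]

lemma hasF_coordMap (D11 D22 : ℝ) (q : ℝ × ℝ × ℝ) :
    HasFDerivAt (coordMap D11 D22) (Aq D11 D22 q) q := by
  have h1 : HasFDerivAt (fun r : ℝ × ℝ × ℝ => r.1) P1 q := hasFDerivAt_fst
  have h2 : HasFDerivAt (fun r : ℝ × ℝ × ℝ => r.2.1) P2 q :=
    hasFDerivAt_fst.comp q hasFDerivAt_snd
  have h3 : HasFDerivAt (fun r : ℝ × ℝ × ℝ => r.2.2) P3 q :=
    hasFDerivAt_snd.comp q hasFDerivAt_snd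
  have big := HasFDerivAt.prodMk (h1.mul_const (Real.sqrt (2 * D22))⁻¹)
    (HasFDerivAt.prodMk (h3.mul_const (Real.sqrt (2 * D11))⁻¹)
      (((h2.sub ((h1.mul h3).mul_const (2:ℝ)⁻¹)).const_mul 2).mul_const (Real.sqrt (D11 * D22))⁻¹))
  refine big.congr_fderiv ?_
  apply ContinuousLinearMap.ext; intro v
  simp [Aq, Prod.ext_iff, smul_eq_mul]
  exact Or.inl (by ring)

lemma quad (f : ℝ × ℝ × ℝ → ℝ) (hf : ContDiff ℝ 2 f)
    (c : ℝ × ℝ × ℝ → ℝ × ℝ × ℝ) (A : (ℝ × ℝ × ℝ) →L[ℝ] (ℝ × ℝ × ℝ)) (p : ℝ × ℝ × ℝ)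
    (hc : HasFDerivAt c A p)
    (w : ℝ × ℝ × ℝ → ℝ × ℝ × ℝ) (W : (ℝ × ℝ × ℝ) →L[ℝ] (ℝ × ℝ × ℝ)) (hw : HasFDerivAt w W p)
    (v : ℝ × ℝ × ℝ) :
    fderiv ℝ (fun q => fderiv ℝ f (c q) (w q)) p v
      = fderiv ℝ (fderiv ℝ f) (c p) (A v) (w p) + fderiv ℝ f (c p) (W v) := by
  have h1 : ContDiff ℝ 1 (fderiv ℝ f) := hf.fderiv_right (by norm_num)
  have hF : HasFDerivAt (fun q => fderiv ℝ f (c q)) ((fderiv ℝ (fderiv ℝ f) (c p)).comp A) p :=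
    ((h1.differentiable one_ne_zero (c p)).hasFDerivAt).comp p hc
  rw [(hF.clm_apply hw).fderiv]
  simp [ContinuousLinearMap.add_apply, ContinuousLinearMap.comp_apply,
    ContinuousLinearMap.flip_apply]
  ring

lemma bexp (B : (ℝ × ℝ × ℝ) →L[ℝ] (ℝ × ℝ × ℝ) →L[ℝ] ℝ) (v w : ℝ × ℝ × ℝ) :
    B v w = v.1 * w.1 * B (1,0,0) (1,0,0) + v.1 * w.2.1 * B (1,0,0) (0,1,0)
      + v.1 * w.2.2 * B (1,0,0) (0,0,1)
      + v.2.1 * w.1 * B (0,1,0) (1,0,0) + v.2.1 * w.2.1 * B (0,1,0) (0,1,0)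
      + v.2.1 * w.2.2 * B (0,1,0) (0,0,1)
      + v.2.2 * w.1 * B (0,0,1) (1,0,0) + v.2.2 * w.2.1 * B (0,0,1) (0,1,0)
      + v.2.2 * w.2.2 * B (0,0,1) (0,0,1) := by
  have hv : v = v.1 • ((1:ℝ),(0:ℝ),(0:ℝ)) + v.2.1 • ((0:ℝ),(1:ℝ),(0:ℝ))
      + v.2.2 • ((0:ℝ),(0:ℝ),(1:ℝ)) := by
    simp [Prod.ext_iff]
  have hw : w = w.1 • ((1:ℝ),(0:ℝ),(0:ℝ)) + w.2.1 • ((0:ℝ),(1:ℝ),(0:ℝ))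
      + w.2.2 • ((0:ℝ),(0:ℝ),(1:ℝ)) := by
    simp [Prod.ext_iff]
  conv_lhs => rw [hv, hw]
  simp only [map_add, map_smul, ContinuousLinearMap.add_apply, ContinuousLinearMap.smul_apply,
    smul_eq_mul]
  ring

set_option maxHeartbeats 1600000 in
theorem stmt_10 (D11 D22 : ℝ) (h11 : 0 < D11) (h22 : 0 < D22)
    (Kt : ℝ × ℝ × ℝ → ℝ) (hKt : ContDiff ℝ 2 Kt) (p : ℝ × ℝ × ℝ) :
    D11 * Dtheta (Dtheta (fun q => Kt (coordMap D11 D22 q))) p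
      + D22 * Dhor (Dhor (fun q => Kt (coordMap D11 D22 q))) p
    = (1 / 2) * (X1 (X1 Kt) (coordMap D11 D22 p) + X2 (X2 Kt) (coordMap D11 D22 p)) := by
  have hKdiff : Differentiable ℝ Kt := hKt.differentiable (by norm_num)
  have hKc : ∀ q : ℝ × ℝ × ℝ, HasFDerivAt (fun r => Kt (coordMap D11 D22 r))
      ((fderiv ℝ Kt (coordMap D11 D22 q)).comp (Aq D11 D22 q)) q := fun q =>
    ((hKdiff (coordMap D11 D22 q)).hasFDerivAt).comp q (hasF_coordMap D11 D22 q)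
  have hfd : ∀ q v : ℝ × ℝ × ℝ, fderiv ℝ (fun r => Kt (coordMap D11 D22 r)) q v
      = fderiv ℝ Kt (coordMap D11 D22 q) (Aq D11 D22 q v) := by
    intro q v; rw [(hKc q).fderiv]; rfl
  -- abbreviations
  set B := fderiv ℝ (fderiv ℝ Kt) (coordMap D11 D22 p) with hB
  -- first derivative rewrites
  have eθ : Dtheta (fun q => Kt (coordMap D11 D22 q))
      = fun q => fderiv ℝ Kt (coordMap D11 D22 q)
          ((0:ℝ), (Real.sqrt (2 * D11))⁻¹, -((Real.sqrt (D11 * D22))⁻¹ * q.1)) := by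
    funext q
    show fderiv ℝ (fun r => Kt (coordMap D11 D22 r)) q (0,0,1) = _
    rw [hfd q (0,0,1)]
    congr 1
    simp [Prod.ext_iff]
    all_goals exact Or.inl (by first | trivial | ring)
  have eh : Dhor (fun q => Kt (coordMap D11 D22 q))
      = fun q => fderiv ℝ Kt (coordMap D11 D22 q)
          ((Real.sqrt (2 * D22))⁻¹, (0:ℝ), (Real.sqrt (D11 * D22))⁻¹ * q.2.2) := by
    funext q
    show fderiv ℝ (fun r => Kt (coordMap D11 D22 r)) q (1, q.2.2, 0) = _
    rw [hfd q (1, q.2.2, 0)]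
    congr 1
    simp [Prod.ext_iff]
    all_goals exact Or.inl (by first | trivial | ring)
  -- second derivative: theta part
  have hwθ : HasFDerivAt (fun q : ℝ × ℝ × ℝ =>
      ((0:ℝ), (Real.sqrt (2 * D11))⁻¹, -((Real.sqrt (D11 * D22))⁻¹ * q.1)))
      ((0 : (ℝ × ℝ × ℝ) →L[ℝ] ℝ).prod ((0 : (ℝ × ℝ × ℝ) →L[ℝ] ℝ).prod
        (-((Real.sqrt (D11 * D22))⁻¹ • P1)))) p := by
    refine HasFDerivAt.prodMk (hasFDerivAt_const _ _) (HasFDerivAt.prodMk (hasFDerivAt_const _ _) ?_)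
    exact (hasFDerivAt_fst.const_mul (Real.sqrt (D11 * D22))⁻¹).neg
  have E1 : Dtheta (Dtheta (fun q => Kt (coordMap D11 D22 q))) p
      = B (Aq D11 D22 p (0,0,1))
          ((0:ℝ), (Real.sqrt (2 * D11))⁻¹, -((Real.sqrt (D11 * D22))⁻¹ * p.1)) := by
    show fderiv ℝ (Dtheta (fun q => Kt (coordMap D11 D22 q))) p (0,0,1) = _
    rw [eθ, quad Kt hKt (coordMap D11 D22) (Aq D11 D22 p) p (hasF_coordMap D11 D22 p) _ _ hwθ]
    simp [Prod.mk_zero_zero, hB]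
  -- second derivative: horizontal part
  have hwh : HasFDerivAt (fun q : ℝ × ℝ × ℝ =>
      ((Real.sqrt (2 * D22))⁻¹, (0:ℝ), (Real.sqrt (D11 * D22))⁻¹ * q.2.2))
      ((0 : (ℝ × ℝ × ℝ) →L[ℝ] ℝ).prod ((0 : (ℝ × ℝ × ℝ) →L[ℝ] ℝ).prod
        ((Real.sqrt (D11 * D22))⁻¹ • P3))) p := by
    refine HasFDerivAt.prodMk (hasFDerivAt_const _ _) (HasFDerivAt.prodMk (hasFDerivAt_const _ _) ?_)
    exact (hasFDerivAt_snd.comp p hasFDerivAt_snd).const_mul (Real.sqrt (D11 * D22))⁻¹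
  have E2 : Dhor (Dhor (fun q => Kt (coordMap D11 D22 q))) p
      = B (Aq D11 D22 p (1, p.2.2, 0))
          ((Real.sqrt (2 * D22))⁻¹, (0:ℝ), (Real.sqrt (D11 * D22))⁻¹ * p.2.2) := by
    show fderiv ℝ (Dhor (fun q => Kt (coordMap D11 D22 q))) p (1, p.2.2, 0) = _
    rw [eh, quad Kt hKt (coordMap D11 D22) (Aq D11 D22 p) p (hasF_coordMap D11 D22 p) _ _ hwh]
    simp [Prod.mk_zero_zero, hB]
  -- RHS : X1
  have ew1 : X1 Kt = fun u => fderiv ℝ Kt u ((0:ℝ), (1:ℝ), -(2 * u.1)) := by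
    funext u
    show fderiv ℝ Kt u (0,1,0) - 2 * u.1 * fderiv ℝ Kt u (0,0,1) = _
    have h : ((0:ℝ), (1:ℝ), -(2 * u.1))
        = ((0:ℝ),(1:ℝ),(0:ℝ)) - (2 * u.1) • ((0:ℝ),(0:ℝ),(1:ℝ)) := by
      simp [Prod.ext_iff]
    rw [h, map_sub, map_smul, smul_eq_mul]
  have hw1 : HasFDerivAt (fun u : ℝ × ℝ × ℝ => ((0:ℝ), (1:ℝ), -(2 * u.1)))
      ((0 : (ℝ × ℝ × ℝ) →L[ℝ] ℝ).prod ((0 : (ℝ × ℝ × ℝ) →L[ℝ] ℝ).prod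
        (-((2:ℝ) • P1)))) (coordMap D11 D22 p) := by
    refine HasFDerivAt.prodMk (hasFDerivAt_const _ _) (HasFDerivAt.prodMk (hasFDerivAt_const _ _) ?_)
    exact (hasFDerivAt_fst.const_mul 2).neg
  have E3 : X1 (X1 Kt) (coordMap D11 D22 p)
      = B (0,1,0) ((0:ℝ), (1:ℝ), -(2 * (coordMap D11 D22 p).1))
        - 2 * (coordMap D11 D22 p).1
          * B (0,0,1) ((0:ℝ), (1:ℝ), -(2 * (coordMap D11 D22 p).1)) := by
    show fderiv ℝ (X1 Kt) (coordMap D11 D22 p) (0,1,0)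
        - 2 * (coordMap D11 D22 p).1 * fderiv ℝ (X1 Kt) (coordMap D11 D22 p) (0,0,1) = _
    rw [ew1,
      quad Kt hKt (fun x => x) (ContinuousLinearMap.id ℝ (ℝ × ℝ × ℝ)) (coordMap D11 D22 p)
        (hasFDerivAt_id _) _ _ hw1 (0,1,0),
      quad Kt hKt (fun x => x) (ContinuousLinearMap.id ℝ (ℝ × ℝ × ℝ)) (coordMap D11 D22 p)
        (hasFDerivAt_id _) _ _ hw1 (0,0,1)]
    simp [Prod.mk_zero_zero, hB]
  -- RHS : X2
  have ew2 : X2 Kt = fun u => fderiv ℝ Kt u ((1:ℝ), (0:ℝ), 2 * u.2.1) := by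
    funext u
    show fderiv ℝ Kt u (1,0,0) + 2 * u.2.1 * fderiv ℝ Kt u (0,0,1) = _
    have h : ((1:ℝ), (0:ℝ), 2 * u.2.1)
        = ((1:ℝ),(0:ℝ),(0:ℝ)) + (2 * u.2.1) • ((0:ℝ),(0:ℝ),(1:ℝ)) := by
      simp [Prod.ext_iff]
    rw [h, map_add, map_smul, smul_eq_mul]
  have hw2 : HasFDerivAt (fun u : ℝ × ℝ × ℝ => ((1:ℝ), (0:ℝ), 2 * u.2.1))
      ((0 : (ℝ × ℝ × ℝ) →L[ℝ] ℝ).prod ((0 : (ℝ × ℝ × ℝ) →L[ℝ] ℝ).prod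
        ((2:ℝ) • P2))) (coordMap D11 D22 p) := by
    refine HasFDerivAt.prodMk (hasFDerivAt_const _ _) (HasFDerivAt.prodMk (hasFDerivAt_const _ _) ?_)
    exact (hasFDerivAt_fst.comp _ hasFDerivAt_snd).const_mul 2
  have E4 : X2 (X2 Kt) (coordMap D11 D22 p)
      = B (1,0,0) ((1:ℝ), (0:ℝ), 2 * (coordMap D11 D22 p).2.1)
        + 2 * (coordMap D11 D22 p).2.1
          * B (0,0,1) ((1:ℝ), (0:ℝ), 2 * (coordMap D11 D22 p).2.1) := by
    show fderiv ℝ (X2 Kt) (coordMap D11 D22 p) (1,0,0)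
        + 2 * (coordMap D11 D22 p).2.1 * fderiv ℝ (X2 Kt) (coordMap D11 D22 p) (0,0,1) = _
    rw [ew2,
      quad Kt hKt (fun x => x) (ContinuousLinearMap.id ℝ (ℝ × ℝ × ℝ)) (coordMap D11 D22 p)
        (hasFDerivAt_id _) _ _ hw2 (1,0,0),
      quad Kt hKt (fun x => x) (ContinuousLinearMap.id ℝ (ℝ × ℝ × ℝ)) (coordMap D11 D22 p)
        (hasFDerivAt_id _) _ _ hw2 (0,0,1)]
    simp [Prod.mk_zero_zero, hB]
  -- assemble
  rw [E1, E2, E3, E4]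
  rw [bexp B (Aq D11 D22 p (0,0,1))
        ((0:ℝ), (Real.sqrt (2 * D11))⁻¹, -((Real.sqrt (D11 * D22))⁻¹ * p.1)),
    bexp B (Aq D11 D22 p (1, p.2.2, 0))
        ((Real.sqrt (2 * D22))⁻¹, (0:ℝ), (Real.sqrt (D11 * D22))⁻¹ * p.2.2),
    bexp B ((0:ℝ),(1:ℝ),(0:ℝ)) ((0:ℝ), (1:ℝ), -(2 * (coordMap D11 D22 p).1)),
    bexp B ((1:ℝ),(0:ℝ),(0:ℝ)) ((1:ℝ), (0:ℝ), 2 * (coordMap D11 D22 p).2.1),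
    bexp B ((0:ℝ),(0:ℝ),(1:ℝ)) ((0:ℝ), (1:ℝ), -(2 * (coordMap D11 D22 p).1)),
    bexp B ((0:ℝ),(0:ℝ),(1:ℝ)) ((1:ℝ), (0:ℝ), 2 * (coordMap D11 D22 p).2.1)]
  simp only [Aq_apply, coordMap]
  -- scalar identity
  have hc0 : Real.sqrt (D11 * D22) = Real.sqrt (2 * D22) * Real.sqrt (2 * D11) / 2 := by
    rw [← Real.sqrt_mul (by positivity : (0:ℝ) ≤ 2 * D22) (2 * D11)]
    rw [show (2*D22)*(2*D11) = 2^2 * (D11*D22) by ring,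
      Real.sqrt_mul (by positivity : (0:ℝ) ≤ (2:ℝ)^2), Real.sqrt_sq (by norm_num : (0:ℝ) ≤ 2)]
    ring
  have h2a : Real.sqrt (2 * D22) ^ 2 = 2 * D22 := Real.sq_sqrt (by positivity)
  have h2b : Real.sqrt (2 * D11) ^ 2 = 2 * D11 := Real.sq_sqrt (by positivity)
  have hane : Real.sqrt (2 * D22) ≠ 0 := by positivity
  have hbne : Real.sqrt (2 * D11) ≠ 0 := by positivity
  have hd11 : D11 = Real.sqrt (2 * D11) ^ 2 / 2 := by rw [h2b]; ring
  have hd22 : D22 = Real.sqrt (2 * D22) ^ 2 / 2 := by rw [h2a]; ring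
  rw [hc0]
  generalize hX : Real.sqrt (2 * D22) = a at hd22 hane ⊢
  generalize hY : Real.sqrt (2 * D11) = b at hd11 hbne ⊢
  rw [hd11, hd22]
  field_simp
  ring
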